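/- Let n = 3 with 2 ≤ r_1 ≤ r_2 ≤ r_3, assume d ∈ V_3, and let c = (c_1,c_2,c_3) ∈ ℤ^3. If c ∈ C(r_1,r_2,r_3), then there exists x ∈ ℝ^d with −1 < x_k ≤ 0 for all k = 1,…,d such that c_j − 1 < τ_j(x) ≤ c_j for j = 1,2,3. -/

import Mathlib

set_option maxHeartbeats 1000000


/-- The linear form `τ_j(x) = Σ_{k ∈ V_1 ∪ V_2} x_k - Σ_{ℓ ∈ V_j} x_ℓ - x_d` (for
`n = 3`, where `vlast` is the last coordinate `d`). -/
noncomputable def tau3 (d : ℕ) (V1 V2 Vj : Finset (Fin d)) (vlast : Fin d)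
    (x : Fin d → ℝ) : ℝ :=
  (∑ k ∈ V1 ∪ V2, x k) - (∑ k ∈ Vj, x k) - x vlast

/-- Membership of `(z_1,z_2,z_3) ∈ ℤ^3` in the polytope `C(r_1,r_2,r_3)`. -/
def inC3 (r1 r2 r3 : ℕ) (z1 z2 z3 : ℤ) : Prop :=
  -(r2 : ℤ) ≤ z1 - z2 ∧ z1 - z2 ≤ (r1 : ℤ) ∧
  -(r3 : ℤ) ≤ z1 - z3 ∧ z1 - z3 ≤ (r1 : ℤ) ∧
  -(r3 : ℤ) ≤ z2 - z3 ∧ z2 - z3 ≤ (r2 : ℤ) ∧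
  -(r2 : ℤ) + 1 ≤ z1 ∧ z1 ≤ 1 ∧
  -(r1 : ℤ) + 1 ≤ z2 ∧ z2 ≤ 1 ∧
  -(r3 : ℤ) + 1 ≤ z1 + z2 - z3 ∧ z1 + z2 - z3 ≤ 1

/-- Implication (b) ⇒ (a) for `n = 3`, `2 ≤ r_1 ≤ r_2 ≤ r_3`: every lattice point `c` of
`C(r_1,r_2,r_3)` arises as `c_j - 1 < τ_j(x) ≤ c_j` (`j = 1,2,3`) for some
`x ∈ (-1,0]^d`. -/
theorem stmt_10 (r1 r2 r3 : ℕ) (h1 : 2 ≤ r1) (h12 : r1 ≤ r2) (h23 : r2 ≤ r3)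
    (d : ℕ) (hd : d = r1 + r2 + r3)
    (V1 V2 V3 : Finset (Fin d))
    (hc1 : V1.card = r1) (hc2 : V2.card = r2) (hc3 : V3.card = r3)
    (hd12 : Disjoint V1 V2) (hd13 : Disjoint V1 V3) (hd23 : Disjoint V2 V3)
    (hcover : V1 ∪ V2 ∪ V3 = Finset.univ)
    (vlast : Fin d) (hvlast : (vlast : ℕ) = d - 1) (hlast : vlast ∈ V3)
    (c1 c2 c3 : ℤ) (hC : inC3 r1 r2 r3 c1 c2 c3) :
    ∃ x : Fin d → ℝ, (∀ k, -1 < x k ∧ x k ≤ 0) ∧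
      ((c1 : ℝ) - 1 < tau3 d V1 V2 V1 vlast x ∧ tau3 d V1 V2 V1 vlast x ≤ (c1 : ℝ)) ∧
      ((c2 : ℝ) - 1 < tau3 d V1 V2 V2 vlast x ∧ tau3 d V1 V2 V2 vlast x ≤ (c2 : ℝ)) ∧
      ((c3 : ℝ) - 1 < tau3 d V1 V2 V3 vlast x ∧ tau3 d V1 V2 V3 vlast x ≤ (c3 : ℝ)) := by
  obtain ⟨hC1, hC2, hC3, hC4, hC5, hC6, hC7, hC8, hC9, hC10, hC11, hC12⟩ := hC
  -- real versions of the basic bounds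
  have hr1 : (2:ℝ) ≤ (r1:ℕ) := by exact_mod_cast h1
  have hr2 : (2:ℝ) ≤ (r2:ℕ) := by exact_mod_cast h1.trans h12
  have hr3 : (2:ℝ) ≤ (r3:ℕ) := by exact_mod_cast (h1.trans h12).trans h23
  have hc1R : (1:ℝ) - r2 ≤ (c1:ℝ) := by
    have : (1:ℤ) - r2 ≤ c1 := by omega
    exact_mod_cast this
  have hc1R' : (c1:ℝ) ≤ 1 := by exact_mod_cast hC8
  have hc2R : (1:ℝ) - r1 ≤ (c2:ℝ) := by
    have : (1:ℤ) - r1 ≤ c2 := by omega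
    exact_mod_cast this
  have hc2R' : (c2:ℝ) ≤ 1 := by exact_mod_cast hC10
  -- the shaving amount A and the asymmetry e
  set A : ℝ := if c1 + c2 - c3 = 1 then 1 else 1/2 with hA
  set e : ℝ := if c2 - c1 = (r2:ℤ) then -(1/8) else if c1 - c2 = (r1:ℤ) then 1/8 else 0 with he
  set u1 : ℝ := (c2:ℝ) - (A/2 - e) with hu1
  set u2 : ℝ := (c1:ℝ) - (A/2 + e) with hu2
  -- bounds on e
  have heb : -(1/8 : ℝ) ≤ e ∧ e ≤ 1/8 := by
    rw [he]; split_ifs <;> norm_num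
  -- A cases
  have hAc : (c1 + c2 - c3 = 1 ∧ A = 1) ∨ (c1 + c2 - c3 ≤ 0 ∧ A = 1/2) := by
    by_cases h : c1 + c2 - c3 = 1
    · exact Or.inl ⟨h, by rw [hA, if_pos h]⟩
    · exact Or.inr ⟨by omega, by rw [hA, if_neg h]⟩
  have hAb : (1/2 : ℝ) ≤ A ∧ A ≤ 1 := by
    rcases hAc with ⟨_, h⟩ | ⟨_, h⟩ <;> rw [h] <;> norm_num
  -- key fact (5): u1 + u2 ≤ c3
  have hkey5 : u1 + u2 ≤ (c3:ℝ) := by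
    rw [hu1, hu2]
    rcases hAc with ⟨h, hAv⟩ | ⟨h, hAv⟩
    · have : (c1:ℝ) + c2 - c3 = 1 := by exact_mod_cast congrArg (Int.cast : ℤ → ℝ) h
      rw [hAv]; linarith
    · have : (c1:ℝ) + c2 - c3 ≤ 0 := by exact_mod_cast h
      rw [hAv]; linarith
  -- key fact (6): u1 + u2 > c3 - r3
  have hkey6 : (c3:ℝ) - r3 < u1 + u2 := by
    rw [hu1, hu2]
    rcases hAc with ⟨h, hAv⟩ | ⟨h, hAv⟩
    · have : (c1:ℝ) + c2 - c3 = 1 := by exact_mod_cast congrArg (Int.cast : ℤ → ℝ) h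
      rw [hAv]; linarith
    · have h' : (1:ℤ) - r3 ≤ c1 + c2 - c3 := by omega
      have : (1:ℝ) - r3 ≤ (c1:ℝ) + c2 - c3 := by exact_mod_cast h'
      rw [hAv]; linarith
  -- key fact (7): u1 - u2 < r2
  have hkey7 : u1 - u2 < (r2:ℝ) := by
    rw [hu1, hu2]
    by_cases h : c2 - c1 = (r2:ℤ)
    · have hev : e = -(1/8) := by rw [he, if_pos h]
      have : (c2:ℝ) - c1 = r2 := by exact_mod_cast congrArg (Int.cast : ℤ → ℝ) h
      rw [hev]; linarith
    · have h' : c2 - c1 ≤ (r2:ℤ) - 1 := by omega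
      have h'' : (c2:ℝ) - c1 ≤ (r2:ℝ) - 1 := by exact_mod_cast h'
      have := heb.2; linarith
  -- key fact (8): u2 - u1 < r1
  have hkey8 : u2 - u1 < (r1:ℝ) := by
    rw [hu1, hu2]
    by_cases h : c2 - c1 = (r2:ℤ)
    · have hev : e = -(1/8) := by rw [he, if_pos h]
      have : (c2:ℝ) - c1 = r2 := by exact_mod_cast congrArg (Int.cast : ℤ → ℝ) h
      rw [hev]; linarith
    · by_cases h2 : c1 - c2 = (r1:ℤ)
      · have hev : e = 1/8 := by rw [he, if_neg h, if_pos h2]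
        have : (c1:ℝ) - c2 = r1 := by exact_mod_cast congrArg (Int.cast : ℤ → ℝ) h2
        rw [hev]; linarith
      · have hev : e = 0 := by rw [he, if_neg h, if_neg h2]
        have h' : c1 - c2 ≤ (r1:ℤ) - 1 := by omega
        have h'' : (c1:ℝ) - c2 ≤ (r1:ℝ) - 1 := by exact_mod_cast h'
        rw [hev]; linarith
  -- bounds on u1, u2
  have hu1lt : u1 < 1 := by rw [hu1]; have := heb.2; have := hAb.1; linarith
  have hu1gt : -(r1:ℝ) < u1 := by rw [hu1]; have := heb.1; have := hAb.2; linarith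
  have hu1le : u1 ≤ (c2:ℝ) := by rw [hu1]; have := heb.2; have := hAb.1; linarith
  have hu1gt' : (c2:ℝ) - 1 < u1 := by rw [hu1]; have := heb.1; have := hAb.2; linarith
  have hu2lt : u2 < 1 := by rw [hu2]; have := heb.1; have := hAb.1; linarith
  have hu2gt : -(r2:ℝ) < u2 := by rw [hu2]; have := heb.2; have := hAb.2; linarith
  have hu2le : u2 ≤ (c1:ℝ) := by rw [hu2]; have := heb.1; have := hAb.1; linarith
  have hu2gt' : (c1:ℝ) - 1 < u2 := by rw [hu2]; have := heb.2; have := hAb.2; linarith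
  -- the last coordinate t
  set t : ℝ := -max 0 (max u1 u2) with htdef
  have htle : t ≤ 0 := by
    rw [htdef]; simp [le_max_left]
  have htgt : -1 < t := by
    rw [htdef]
    have : max 0 (max u1 u2) < 1 := max_lt one_pos (max_lt hu1lt hu2lt)
    linarith
  have hS1le : u1 + t ≤ 0 := by
    rw [htdef]
    have : u1 ≤ max 0 (max u1 u2) := le_trans (le_max_left _ _) (le_max_right _ _)
    linarith
  have hS2le : u2 + t ≤ 0 := by
    rw [htdef]
    have : u2 ≤ max 0 (max u1 u2) := le_trans (le_max_right _ _) (le_max_right _ _)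
    linarith
  have hS1gt : -(r1:ℝ) < u1 + t := by
    rw [htdef]
    have : max 0 (max u1 u2) < r1 + u1 :=
      max_lt (by linarith) (max_lt (by linarith) (by linarith))
    linarith
  have hS2gt : -(r2:ℝ) < u2 + t := by
    rw [htdef]
    have : max 0 (max u1 u2) < r2 + u2 :=
      max_lt (by linarith) (max_lt (by linarith) (by linarith))
    linarith
  -- the V3-block value w
  set B : ℝ := u1 + u2 - c3 with hBdef
  have hBle : B ≤ 0 := by rw [hBdef]; linarith
  have hBgt : -(r3:ℝ) < B := by rw [hBdef]; linarith
  set w : ℝ := max B ((2 - (r3:ℝ) + B)/2) with hwdef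
  have hwB : B ≤ w := le_max_left _ _
  have hwB1 : w < B + 1 := max_lt (by linarith) (by linarith)
  have hwle : w ≤ 0 := max_le hBle (by linarith)
  have hwgt : 1 - (r3:ℝ) < w := lt_of_lt_of_le (by linarith) (le_max_right _ _)
  -- positivity of sizes
  have hr1pos : (0:ℝ) < (r1:ℕ) := by linarith
  have hr2pos : (0:ℝ) < (r2:ℕ) := by linarith
  have hr3pos : (0:ℝ) < (r3:ℝ) - 1 := by linarith
  have hvlast1 : vlast ∉ V1 := Finset.disjoint_right.mp hd13 hlast
  have hvlast2 : vlast ∉ V2 := Finset.disjoint_right.mp hd23 hlast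
  -- the point x
  set x : Fin d → ℝ := fun k =>
    if k = vlast then t else if k ∈ V1 then (u1+t)/r1 else if k ∈ V2 then (u2+t)/r2
      else w/((r3:ℝ)-1) with hx
  have hxlast : x vlast = t := by rw [hx]; simp
  have hx1 : ∀ k ∈ V1, x k = (u1+t)/r1 := by
    intro k hk
    rw [hx]
    have : k ≠ vlast := by rintro rfl; exact hvlast1 hk
    simp only [if_neg this, if_pos hk]
  have hx2 : ∀ k ∈ V2, x k = (u2+t)/r2 := by
    intro k hk
    rw [hx]
    have h0 : k ≠ vlast := by rintro rfl; exact hvlast2 hk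
    have h1' : k ∉ V1 := Finset.disjoint_right.mp hd12 hk
    simp only [if_neg h0, if_neg h1', if_pos hk]
  have hs1 : ∑ k ∈ V1, x k = u1 + t := by
    rw [Finset.sum_congr rfl hx1, Finset.sum_const, hc1, nsmul_eq_mul]
    field_simp
  have hs2 : ∑ k ∈ V2, x k = u2 + t := by
    rw [Finset.sum_congr rfl hx2, Finset.sum_const, hc2, nsmul_eq_mul]
    field_simp
  have hs3 : ∑ k ∈ V3, x k = t + w := by
    rw [← Finset.add_sum_erase _ _ hlast, hxlast]
    have h2 : ∀ k ∈ V3.erase vlast, x k = w/((r3:ℝ)-1) := by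
      intro k hk
      obtain ⟨hne, hk3⟩ := Finset.mem_erase.mp hk
      have hk1 : k ∉ V1 := Finset.disjoint_right.mp hd13 hk3
      have hk2 : k ∉ V2 := Finset.disjoint_right.mp hd23 hk3
      rw [hx]
      simp only [if_neg hne, if_neg hk1, if_neg hk2]
    rw [Finset.sum_congr rfl h2, Finset.sum_const, Finset.card_erase_of_mem hlast, hc3,
      nsmul_eq_mul]
    have hcast : ((r3 - 1 : ℕ) : ℝ) = (r3:ℝ) - 1 := by
      have : 1 ≤ r3 := by omega
      push_cast [this]; ring
    rw [hcast]
    field_simp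
  have hsum12 : ∑ k ∈ V1 ∪ V2, x k = (u1 + t) + (u2 + t) := by
    rw [Finset.sum_union hd12, hs1, hs2]
  have htau1 : tau3 d V1 V2 V1 vlast x = u2 := by
    unfold tau3; rw [hsum12, hs1, hxlast]; ring
  have htau2 : tau3 d V1 V2 V2 vlast x = u1 := by
    unfold tau3; rw [hsum12, hs2, hxlast]; ring
  have htau3 : tau3 d V1 V2 V3 vlast x = u1 + u2 - w := by
    unfold tau3; rw [hsum12, hs3, hxlast]; ring
  refine ⟨x, ?_, ?_, ?_, ?_⟩
  · intro k
    rw [hx]; dsimp only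
    split_ifs with h1' h2' h3'
    · exact ⟨htgt, htle⟩
    · constructor
      · rw [lt_div_iff₀ hr1pos]; linarith
      · apply div_nonpos_of_nonpos_of_nonneg hS1le; linarith
    · constructor
      · rw [lt_div_iff₀ hr2pos]; linarith
      · apply div_nonpos_of_nonpos_of_nonneg hS2le; linarith
    · constructor
      · rw [lt_div_iff₀ hr3pos]; linarith
      · apply div_nonpos_of_nonpos_of_nonneg hwle; linarith
  · rw [htau1]; exact ⟨hu2gt', hu2le⟩
  · rw [htau2]; exact ⟨hu1gt', hu1le⟩
  · rw [htau3]
    constructor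
    · rw [hBdef] at hwB1; linarith
    · rw [hBdef] at hwB; linarith
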